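/- Let M₁, …, M_q ∈ ℝᵖ and m₁, …, m_q ≥ 0 with m_{i*} ≥ m̲ > 0 for some index i*. For each i, let Ω_i = { W ∈ ℝᵖ : W = Σ_{j≠i} m_j M_j for some m_j ≥ 0 } be the conical hull of the other vectors, and assume −M_i ∉ Ω_i for all i. Then there exists ε > 0, depending only on the M_i, such that ‖Σ_{i=1}^q m_i M_i‖² ≥ ε·m̲² > 0. -/
import Mathlib


open Finset

theorem stmt_1 (p q : ℕ) (M : Fin q → EuclideanSpace ℝ (Fin p))
    (hcone : ∀ i : Fin q,
      -M i ∉ {W : EuclideanSpace ℝ (Fin p) |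
        ∃ m : Fin q → ℝ, (∀ j, 0 ≤ m j) ∧ W = ∑ j ∈ Finset.univ \ {i}, m j • M j}) :
    ∃ ε > 0, ∀ (m : Fin q → ℝ) (mbar : ℝ) (istar : Fin q),
      (∀ i, 0 ≤ m i) → 0 < mbar → mbar ≤ m istar →
      ‖∑ i, m i • M i‖ ^ 2 ≥ ε * mbar ^ 2 ∧ 0 < ε * mbar ^ 2 := by
  rcases Nat.eq_zero_or_pos q with hq | hq
  · subst hq
    exact ⟨1, one_pos, fun m mbar istar => absurd istar.2 (by omega)⟩
  haveI : Nonempty (Fin q) := ⟨⟨0, hq⟩⟩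
  set K : Set (Fin q → ℝ) :=
    {m | (∀ j, m j ∈ Set.Icc (0:ℝ) 1) ∧ ∃ j, m j = 1} with hK
  have hKsub : K ⊆ Set.pi Set.univ (fun _ : Fin q => Set.Icc (0:ℝ) 1) := by
    intro m hm j _; exact hm.1 j
  have hKclosed : IsClosed K := by
    have h1 : IsClosed {m : Fin q → ℝ | ∀ j, m j ∈ Set.Icc (0:ℝ) 1} := by
      have : {m : Fin q → ℝ | ∀ j, m j ∈ Set.Icc (0:ℝ) 1} =
          Set.pi Set.univ (fun _ : Fin q => Set.Icc (0:ℝ) 1) := by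
        ext m; simp [Set.mem_pi, Set.mem_Icc, Pi.le_def, forall_and]
      rw [this]
      exact isClosed_set_pi (fun j _ => isClosed_Icc)
    have h2 : IsClosed {m : Fin q → ℝ | ∃ j, m j = 1} := by
      have : {m : Fin q → ℝ | ∃ j, m j = 1} =
          ⋃ j : Fin q, (fun m : Fin q → ℝ => m j) ⁻¹' {1} := by
        ext m; simp
      rw [this]
      exact isClosed_iUnion_of_finite (fun j =>
        isClosed_singleton.preimage (continuous_apply j))
    exact h1.inter h2
  have hKcompact : IsCompact K :=
    (isCompact_univ_pi (fun _ => isCompact_Icc)).of_isClosed_subset hKclosed hKsub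
  have hKne : K.Nonempty := ⟨fun _ => 1, fun j => ⟨zero_le_one, le_refl 1⟩, ⟨⟨0, hq⟩, rfl⟩⟩
  have hfcont : Continuous (fun m : Fin q → ℝ => ‖∑ j, m j • M j‖ ^ 2) := by
    have : Continuous (fun m : Fin q → ℝ => ∑ j, m j • M j) :=
      continuous_finset_sum _ (fun j _ => (continuous_apply j).smul continuous_const)
    exact (this.norm).pow 2
  obtain ⟨m₀, hm₀K, hmin⟩ := hKcompact.exists_isMinOn hKne hfcont.continuousOn
  set ε := ‖∑ j, m₀ j • M j‖ ^ 2 with hε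
  have hεpos : 0 < ε := by
    rcases lt_or_eq_of_le (by positivity : (0:ℝ) ≤ ε) with h | h
    · exact h
    exfalso
    have hsum : ∑ j, m₀ j • M j = 0 := by
      have : ‖∑ j, m₀ j • M j‖ = 0 := by
        have := h.symm
        rw [hε] at this
        nlinarith [norm_nonneg (∑ j, m₀ j • M j)]
      exact norm_eq_zero.mp this
    obtain ⟨i, hi⟩ := hm₀K.2
    apply hcone i
    refine ⟨m₀, fun j => (hm₀K.1 j).1, ?_⟩
    have hsplit : ∑ j, m₀ j • M j = (∑ j ∈ Finset.univ \ {i}, m₀ j • M j) + m₀ i • M i := by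
      rw [Finset.sum_eq_sum_sdiff_singleton_add (Finset.mem_univ i)]
    rw [hsplit, hi, one_smul] at hsum
    linear_combination (norm := module) -hsum
  refine ⟨ε, hεpos, fun m mbar istar hm hmbar hle => ?_⟩
  have hεm : 0 < ε * mbar ^ 2 := by positivity
  refine ⟨?_, hεm⟩
  set T := Finset.univ.sup' Finset.univ_nonempty m with hT
  have hTge : ∀ j, m j ≤ T := fun j => Finset.le_sup' m (Finset.mem_univ j)
  have hTpos : 0 < T := lt_of_lt_of_le hmbar (le_trans hle (hTge istar))
  obtain ⟨j₀, _, hj₀⟩ := Finset.exists_mem_eq_sup' Finset.univ_nonempty m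
  have hm'K : (fun j => m j / T) ∈ K := by
    constructor
    · intro j
      exact ⟨div_nonneg (hm j) hTpos.le, (div_le_one hTpos).mpr (hTge j)⟩
    · refine ⟨j₀, ?_⟩
      show m j₀ / T = 1
      have hTj : m j₀ = T := (hT.trans hj₀).symm
      rw [hTj]; exact div_self hTpos.ne'
  have hkey : ε ≤ ‖∑ j, (m j / T) • M j‖ ^ 2 := hmin hm'K
  have hscale : ∑ j, m j • M j = T • ∑ j, (m j / T) • M j := by
    rw [Finset.smul_sum]
    apply Finset.sum_congr rfl
    intro j _
    rw [smul_smul, mul_div_cancel₀ _ hTpos.ne']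
  rw [hscale, norm_smul, Real.norm_eq_abs, abs_of_pos hTpos, mul_pow]
  have hTmbar : mbar ^ 2 ≤ T ^ 2 := by
    have := le_trans hle (hTge istar)
    nlinarith
  nlinarith [hkey, sq_nonneg T, sq_nonneg mbar, norm_nonneg (∑ j, (m j / T) • M j)]
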